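/- For every h ∈ ℝ: 0 < g(h) < 1, the derivative of p^{(0)} satisfies (p^{(0)})'(h) = g(h), and the derivative of g satisfies g'(h) = 2·g(h)·(1 − g(h))/(2 − g(h)) > 0. -/
import Mathlib


open MeasureTheory Filter Real

noncomputable section

/-- `g(h) = (e^h/2)(√(e^{2h}+4) − e^h)`. -/
def gFun (h : ℝ) : ℝ := Real.exp h / 2 * (Real.sqrt (Real.exp (2*h) + 4) - Real.exp h)

/-- `p⁰(h) = −(1−g(h))/2 − (1/2)·log(1−g(h))`. -/
def p0 (h : ℝ) : ℝ := -(1 - gFun h)/2 - (1/2) * Real.log (1 - gFun h)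

/-- Variational pressure `p̃(m) = −Jm² + p⁰((2m−1)J + h)`. -/
def ptilde (h J m : ℝ) : ℝ := -J * m^2 + p0 ((2*m - 1) * J + h)


/-- basic properties of `g`: `0 < g(h) < 1`, `(p⁰)'(h) = g(h)` and
`g'(h) = 2g(h)(1 − g(h))/(2 − g(h)) > 0`. -/
theorem gFun_properties (h : ℝ) :
    0 < gFun h ∧ gFun h < 1 ∧ deriv p0 h = gFun h ∧
    deriv gFun h = 2 * gFun h * (1 - gFun h) / (2 - gFun h) ∧
    0 < deriv gFun h := by
  have hx : (0:ℝ) < Real.exp h := Real.exp_pos h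
  set x : ℝ := Real.exp h with hxdef
  have hx2 : Real.exp (2*h) = x^2 := by rw [two_mul, Real.exp_add]; ring
  set s : ℝ := Real.sqrt (x^2 + 4) with hsdef
  have hs0 : 0 < s := Real.sqrt_pos.mpr (by positivity)
  have hs2 : s^2 = x^2 + 4 := Real.sq_sqrt (by positivity)
  have hsx : x < s := by nlinarith
  have hg : gFun h = x/2 * (s - x) := by rw [gFun, hx2]
  have hg0 : 0 < gFun h := by rw [hg]; nlinarith
  have hg1 : gFun h < 1 := by
    rw [hg]; nlinarith [sq_nonneg (x*s - x^2 - 2), mul_pos hx hs0]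
  have h1g : (0:ℝ) < 1 - gFun h := by linarith
  have h2g : (0:ℝ) < 2 - gFun h := by linarith
  -- derivative of gFun
  have hd1 : HasDerivAt (fun t : ℝ => Real.exp (2*t)) (Real.exp (2*h) * (2*1)) h :=
    HasDerivAt.exp ((hasDerivAt_id h).const_mul 2)
  have hd1' : HasDerivAt (fun t : ℝ => Real.exp (2*t)) (2*x^2) h := by
    convert hd1 using 1; rw [hx2]; ring
  have hne : Real.exp (2*h) + 4 ≠ 0 := by positivity
  have hsq : HasDerivAt (fun t : ℝ => Real.sqrt (Real.exp (2*t) + 4))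
      ((2*x^2) / (2*s)) h := by
    have := (hd1'.add_const 4).sqrt hne
    convert this using 2
    rw [hx2]
  have hv : HasDerivAt (fun t : ℝ => Real.sqrt (Real.exp (2*t) + 4) - Real.exp t)
      ((2*x^2) / (2*s) - x) h := hsq.sub (Real.hasDerivAt_exp h)
  have hu : HasDerivAt (fun t : ℝ => Real.exp t / 2) (x/2) h :=
    (Real.hasDerivAt_exp h).div_const 2
  have hgder : HasDerivAt gFun
      (x/2 * (Real.sqrt (Real.exp (2*h) + 4) - Real.exp h)
        + Real.exp h / 2 * ((2*x^2) / (2*s) - x)) h := hu.mul hv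
  have hgder2 : HasDerivAt gFun (x/2 * (s - x) + x/2 * ((2*x^2)/(2*s) - x)) h := by
    convert hgder using 2 <;> rw [hx2]
  set D : ℝ := x/2 * (s - x) + x/2 * ((2*x^2)/(2*s) - x) with hDdef
  have key : (s - x) * (2 - gFun h) = 2 * s * (1 - gFun h) := by
    rw [hg]; linear_combination (x/2) * hs2
  have hDval : D = 2 * gFun h * (1 - gFun h) / (2 - gFun h) := by
    have hD1 : D = gFun h * (s - x) / s := by
      rw [hDdef, hg]; field_simp; ring
    rw [hD1, div_eq_div_iff hs0.ne' h2g.ne']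
    linear_combination gFun h * key
  have hderivg : deriv gFun h = 2 * gFun h * (1 - gFun h) / (2 - gFun h) := by
    rw [hgder2.deriv, hDval]
  have hderivg_pos : 0 < deriv gFun h := by
    rw [hderivg]
    exact div_pos (by nlinarith) h2g
  -- derivative of p0
  have ha : HasDerivAt (fun t : ℝ => -(1 - gFun t)/2) (D/2) h := by
    have := ((hgder2.const_sub 1).neg).div_const 2
    simpa using this
  have hb : HasDerivAt (fun t : ℝ => Real.log (1 - gFun t)) ((-D)/(1 - gFun h)) h :=
    (hgder2.const_sub 1).log h1g.ne'
  have hp : HasDerivAt p0 (D/2 - 1/2 * ((-D)/(1 - gFun h))) h :=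
    ha.sub (hb.const_mul (1/2))
  have hderivp : deriv p0 h = gFun h := by
    rw [hp.deriv, hDval]
    field_simp
    ring
  exact ⟨hg0, hg1, hderivp, hderivg, hderivg_pos⟩

end
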